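/- Let K ≥ 1 and let λ_α, λ_β be complex numbers with Im λ_α ≠ 0, Im λ_β ≠ 0, λ_α ≠ λ_β, and λ_β ≠ conj(λ_α). Let κ_α, κ_β ∈ ℂ^K be nonzero vectors and set θ = ⟨κ_α, κ_β⟩ / √(‖κ_α‖²·‖κ_β‖²), where ⟨·,·⟩ is the standard Hermitian inner product on ℂ^K. Then 1 − 4·(Im λ_α)·(Im λ_β)·|θ|² / |λ_β − conj(λ_α)|² > 0. -/

import Mathlib

open Complex

/-- Positivity of `g_{αβ} = 1 − 4 Im λ_α Im λ_β |θ|² / |λ_β − conj λ_α|²`. -/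
theorem stmt_5 (K : ℕ) (hK : 1 ≤ K) (lamα lamβ : ℂ)
    (hα : lamα.im ≠ 0) (hβ : lamβ.im ≠ 0) (hne : lamα ≠ lamβ)
    (hconj : lamβ ≠ starRingEnd ℂ lamα)
    (κα κβ : EuclideanSpace ℂ (Fin K)) (hκα : κα ≠ 0) (hκβ : κβ ≠ 0)
    (θ : ℂ)
    (hθ : θ = (inner ℂ κα κβ : ℂ) / (Real.sqrt (‖κα‖ ^ 2 * ‖κβ‖ ^ 2) : ℂ)) :
    1 - 4 * lamα.im * lamβ.im * ‖θ‖ ^ 2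
      / ‖lamβ - starRingEnd ℂ lamα‖ ^ 2 > 0 := by
  have hκα' : (0:ℝ) < ‖κα‖ := norm_pos_iff.mpr hκα
  have hκβ' : (0:ℝ) < ‖κβ‖ := norm_pos_iff.mpr hκβ
  have hden : (0:ℝ) < ‖κα‖ ^ 2 * ‖κβ‖ ^ 2 := by positivity
  -- |θ|² ≤ 1 by Cauchy–Schwarz
  have hCS : ‖(inner ℂ κα κβ : ℂ)‖ ≤ ‖κα‖ * ‖κβ‖ := norm_inner_le_norm κα κβ
  have ht0 : (0:ℝ) ≤ ‖θ‖ ^ 2 := sq_nonneg _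
  have htle : ‖θ‖ ^ 2 ≤ 1 := by
    rw [hθ, norm_div]
    have hs : ‖((Real.sqrt (‖κα‖ ^ 2 * ‖κβ‖ ^ 2) : ℝ) : ℂ)‖
        = Real.sqrt (‖κα‖ ^ 2 * ‖κβ‖ ^ 2) := by
      rw [Complex.norm_of_nonneg (Real.sqrt_nonneg _)]
    rw [hs, div_pow, div_le_one (by positivity), Real.sq_sqrt hden.le]
    have : ‖(inner ℂ κα κβ : ℂ)‖ = ‖(inner ℂ κα κβ : ℂ)‖ := rfl
    rw [this]
    nlinarith [hCS, norm_nonneg (inner ℂ κα κβ : ℂ)]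
  -- denominator
  have hD : ‖lamβ - starRingEnd ℂ lamα‖ ^ 2
      = (lamβ.re - lamα.re) ^ 2 + (lamβ.im + lamα.im) ^ 2 := by
    rw [Complex.sq_norm, Complex.normSq_apply]
    simp [Complex.sub_re, Complex.sub_im]
    ring
  have hDpos : (0:ℝ) < ‖lamβ - starRingEnd ℂ lamα‖ ^ 2 := by
    have h0 : lamβ - starRingEnd ℂ lamα ≠ 0 := sub_ne_zero.mpr hconj
    exact pow_pos (norm_pos_iff.mpr h0) 2
  have hne' : (0:ℝ) < (lamβ.re - lamα.re) ^ 2 + (lamβ.im - lamα.im) ^ 2 := by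
    have h0 : lamβ - lamα ≠ 0 := sub_ne_zero.mpr hne.symm
    have := Complex.normSq_pos.mpr h0
    rw [Complex.normSq_apply, Complex.sub_re, Complex.sub_im] at this
    nlinarith [this]
  rw [gt_iff_lt, sub_pos, div_lt_one hDpos, hD]
  rcases le_or_gt (lamα.im * lamβ.im) 0 with h | h
  · nlinarith [mul_nonpos_of_nonpos_of_nonneg h ht0, hDpos, hD]
  · nlinarith [mul_le_mul_of_nonneg_left htle h.le, hne']
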